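/- Let h be a parabolic Möbius transformation with fixed point P = P(h) ≠ ∞ and translation vector ω = ω(h) ≠ 0, i.e. 1/(h(z) - P) = 1/(z - P) + ω for all z ≠ P. Let g₀(z) = z + 1. Then h⁻¹ ∘ g₀ ∘ h is parabolic with fixed point (ωP - 1)/ω and translation vector -ω², so that |ω(h⁻¹ ∘ g₀ ∘ h)| = |ω(h)|². -/

import Mathlib

/-- The determinant-one matrix representing the parabolic Möbius transformation
with finite fixed point `P` and translation vector `τ`, i.e.
`z ↦ ((1 + τP)z - τP²)/(τz + 1 - τP)`, which satisfies
`1/(g z - P) = 1/(z - P) + τ`. -/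
def mobiusPara (P τ : ℝ) : Matrix (Fin 2) (Fin 2) ℝ :=
  !![1 + τ * P, -(τ * P ^ 2); τ, 1 - τ * P]

/-- If `h` is parabolic with finite fixed point `P` and translation vector
`ω ≠ 0`, and `g₀(z) = z + 1`, then `h⁻¹ ∘ g₀ ∘ h` is parabolic with fixed point
`(ωP - 1)/ω` and translation vector `-ω²`; in particular
`|ω(h⁻¹ ∘ g₀ ∘ h)| = |ω(h)|²`. -/
theorem conj_parabolic_translation_vector_sq (P ω : ℝ) (hω : ω ≠ 0) :
    (mobiusPara P ω)⁻¹ * !![1, 1; 0, 1] * mobiusPara P ω =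
      mobiusPara ((ω * P - 1) / ω) (-ω ^ 2) ∧
    |(-ω ^ 2 : ℝ)| = |ω| ^ 2 := by
  constructor
  · have hdet : (mobiusPara P ω).det = 1 := by
      simp [mobiusPara, Matrix.det_fin_two_of]; ring
    have hinv : (mobiusPara P ω)⁻¹ = !![1 - ω * P, ω * P ^ 2; -ω, 1 + ω * P] := by
      rw [Matrix.inv_def, hdet]
      rw [mobiusPara, Matrix.adjugate_fin_two_of]
      norm_num
    rw [hinv]
    ext i j
    fin_cases i <;> fin_cases j <;>
      simp [mobiusPara, Matrix.mul_apply, Fin.sum_univ_two]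
    all_goals try ring
    all_goals field_simp
  · rw [abs_neg, abs_pow, sq_abs]
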